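/- Let B be a real n×n matrix with a unique eigenvalue μ (so B − μI is nilpotent). Then the kernel of (B − μI) equals the kernel of (e^B − e^μ I). -/

import Mathlib

open Polynomial NormedSpace Finset

/-- Lemma 3.1(i): If `B` is a real `n × n` matrix with unique eigenvalue `μ`
(i.e. its characteristic polynomial is `(X - μ)^n`), then
`Ker (B - μ I) = Ker (exp B - e^μ I)`. -/
theorem ker_sub_smul_one_eq_ker_exp_sub_exp_smul_one
    (n : ℕ) (B : Matrix (Fin n) (Fin n) ℝ) (μ : ℝ)
    (h : B.charpoly = (X - C μ) ^ n) :
    LinearMap.ker (Matrix.mulVecLin (B - μ • (1 : Matrix (Fin n) (Fin n) ℝ))) =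
      LinearMap.ker
        (Matrix.mulVecLin (exp B - Real.exp μ • (1 : Matrix (Fin n) (Fin n) ℝ))) := by
  rcases Nat.eq_zero_or_pos n with hn | hn
  · subst hn
    exact Subsingleton.elim _ _
  obtain ⟨m, rfl⟩ : ∃ m, n = m + 1 := ⟨n - 1, (Nat.succ_pred_eq_of_pos hn).symm⟩
  set N : Matrix (Fin (m + 1)) (Fin (m + 1)) ℝ := B - μ • 1 with hNdef
  have hNn : N ^ (m + 1) = 0 := by
    have h0 := B.aeval_self_charpoly
    rw [h] at h0
    rw [hNdef]
    simpa [map_pow, map_sub, aeval_X, aeval_C, Algebra.algebraMap_eq_smul_one] using h0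
  have hexpN : exp N = ∑ k ∈ range (m + 2), ((k.factorial : ℝ)⁻¹) • N ^ k := by
    rw [exp_eq_tsum ℝ]
    refine tsum_eq_sum fun k hk => ?_
    have hk' : m + 1 ≤ k := Nat.le_of_succ_le (not_lt.mp fun hlt => hk (mem_range.mpr hlt))
    have : N ^ k = 0 := pow_eq_zero_of_le hk' hNn
    simp [this]
  set Cm : Matrix (Fin (m + 1)) (Fin (m + 1)) ℝ :=
    ∑ k ∈ range (m + 1), (((k + 1).factorial : ℝ)⁻¹) • N ^ k with hCdef
  have hNC : exp N - 1 = N * Cm := by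
    rw [hexpN, Finset.sum_range_succ', hCdef, Finset.mul_sum]
    simp [mul_smul_comm, pow_succ']
  set D : Matrix (Fin (m + 1)) (Fin (m + 1)) ℝ :=
    ∑ k ∈ range m, (((k + 2).factorial : ℝ)⁻¹) • N ^ k with hDdef
  have hC1 : Cm = 1 + N * D := by
    have hD : N * D = ∑ k ∈ range m, (((k + 2).factorial : ℝ)⁻¹) • N ^ (k + 1) := by
      rw [hDdef, Finset.mul_sum]
      exact Finset.sum_congr rfl fun k _ => by rw [mul_smul_comm, ← pow_succ']
    rw [hCdef, Finset.sum_range_succ', hD]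
    have h2 : ∀ x : ℕ, x + 1 + 1 = x + 2 := fun _ => rfl
    simp only [h2]
    have h3 : (((0 + 1).factorial : ℕ) : ℝ)⁻¹ • N ^ 0 = 1 := by simp
    rw [h3]
    exact add_comm _ 1
  have hND : Commute N D := by
    refine Commute.sum_right _ _ _ fun k _ => ?_
    exact ((Commute.refl N).pow_right k).smul_right _
  have hNCm : Commute N Cm := by
    rw [hC1]
    exact (Commute.one_right N).add_right ((Commute.refl N).mul_right hND)
  have hCunit : IsUnit Cm := by
    rw [hC1]
    refine IsNilpotent.isUnit_one_add ⟨m + 1, ?_⟩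
    rw [hND.mul_pow, hNn, zero_mul]
  have hcomm : Commute (μ • (1 : Matrix (Fin (m + 1)) (Fin (m + 1)) ℝ)) N :=
    (Commute.one_left N).smul_left μ
  have hexpμ : exp (μ • (1 : Matrix (Fin (m + 1)) (Fin (m + 1)) ℝ)) = Real.exp μ • 1 := by
    letI : SeminormedRing (Matrix (Fin (m + 1)) (Fin (m + 1)) ℝ) := Matrix.linftyOpSemiNormedRing
    letI : NormedRing (Matrix (Fin (m + 1)) (Fin (m + 1)) ℝ) := Matrix.linftyOpNormedRing
    letI : NormedAlgebra ℝ (Matrix (Fin (m + 1)) (Fin (m + 1)) ℝ) := Matrix.linftyOpNormedAlgebra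
    rw [← Algebra.algebraMap_eq_smul_one]
    exact (algebraMap_exp_comm μ).symm.trans (by rw [← Real.exp_eq_exp_ℝ,
      Algebra.algebraMap_eq_smul_one])
  have hexpB : exp B = Real.exp μ • exp N := by
    have hB : B = μ • 1 + N := by rw [hNdef]; abel
    rw [hB, Matrix.exp_add_of_commute _ _ hcomm, hexpμ, smul_mul_assoc, one_mul]
  have key : exp B - Real.exp μ • (1 : Matrix (Fin (m + 1)) (Fin (m + 1)) ℝ)
      = Real.exp μ • (Cm * N) := by
    rw [hexpB, ← smul_sub, hNC, hNCm.eq]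
  rw [key]
  have hsm : Matrix.mulVecLin (Real.exp μ • (Cm * N)) = Real.exp μ • Matrix.mulVecLin (Cm * N) := by
    refine LinearMap.ext fun v => ?_
    show (Real.exp μ • (Cm * N)).mulVec v = Real.exp μ • ((Cm * N).mulVec v)
    rw [Matrix.smul_mulVec]
  rw [hsm, LinearMap.ker_smul _ _ (Real.exp_ne_zero μ), Matrix.mulVecLin_mul,
    LinearMap.ker_comp]
  have hkerC : LinearMap.ker (Matrix.mulVecLin Cm) = ⊥ := by
    obtain ⟨Ci, hCi⟩ := hCunit.exists_left_inv
    rw [LinearMap.ker_eq_bot']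
    intro v hv
    have hvv : Ci.mulVec (Cm.mulVec v) = v := by
      rw [Matrix.mulVec_mulVec, hCi, Matrix.one_mulVec]
    rw [Matrix.mulVecLin_apply] at hv
    rw [← hvv, hv, Matrix.mulVec_zero]
  rw [hkerC, Submodule.comap_bot]
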